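/- Let $N\ge 2$ be an integer, $r>0$ and $0<\alpha\le 1/r$. Then $\int_0^{r} t (1-\alpha t)^{N-1}\,dt \le \frac{N}{N+1} \left(\int_0^{r} (1-\alpha t)^{N-1}\,dt\right)^2$. -/

import Mathlib

open intervalIntegral

theorem stmt_0 (N : ℕ) (hN : 2 ≤ N) (r α : ℝ) (hr : 0 < r) (hα : 0 < α)
    (hαr : α ≤ 1 / r) :
    (∫ t in (0:ℝ)..r, t * (1 - α * t) ^ (N - 1)) ≤
      ((N : ℝ) / (N + 1)) * (∫ t in (0:ℝ)..r, (1 - α * t) ^ (N - 1)) ^ 2 := by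
  obtain ⟨m, rfl⟩ : ∃ m, N = m + 2 := ⟨N - 2, by omega⟩
  have hα0 : α ≠ 0 := hα.ne'
  have hb0 : (0:ℝ) ≤ 1 - α * r := by
    rw [le_div_iff₀ hr] at hαr; linarith
  set b : ℝ := 1 - α * r with hbdef
  have hmsub : m + 2 - 1 = m + 1 := by omega
  have hm2 : (0:ℝ) < (m:ℝ) + 2 := by positivity
  have hm3 : (0:ℝ) < (m:ℝ) + 3 := by positivity
  -- derivative of the inner function
  have hin : ∀ t : ℝ, HasDerivAt (fun t : ℝ => 1 - α * t) (-α) t := by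
    intro t
    simpa using ((hasDerivAt_id t).const_mul α).const_sub 1
  -- first integral
  have hI0 : (∫ t in (0:ℝ)..r, (1 - α * t) ^ (m + 2 - 1)) =
      (1 - b ^ (m + 2)) / (((m:ℝ) + 2) * α) := by
    rw [hmsub]
    have hF : ∀ t : ℝ, HasDerivAt (fun t : ℝ => -(1 - α * t) ^ (m + 2) / (((m:ℝ) + 2) * α))
        ((1 - α * t) ^ (m + 1)) t := by
      intro t
      have h := (((hin t).pow (m + 2)).neg.div_const (((m:ℝ) + 2) * α))
      convert h using 1
      · rfl
      · rfl
      · rfl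
      have : (m + 2 - 1) = m + 1 := by omega
      rw [this]
      field_simp
      push_cast
      ring
    rw [integral_eq_sub_of_hasDerivAt (fun t _ => hF t)
      (((continuous_const.sub (continuous_const.mul continuous_id)).pow _).intervalIntegrable 0 r)]
    simp only [hbdef]
    field_simp
    ring
  -- second integral
  have hI1 : (∫ t in (0:ℝ)..r, t * (1 - α * t) ^ (m + 2 - 1)) =
      (1 / ((m:ℝ) + 2) - 1 / ((m:ℝ) + 3) - b ^ (m + 2) / ((m:ℝ) + 2)
        + b ^ (m + 3) / ((m:ℝ) + 3)) / α ^ 2 := by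
    rw [hmsub]
    have hG : ∀ t : ℝ, HasDerivAt (fun t : ℝ =>
        (-(1 - α * t) ^ (m + 2) / ((m:ℝ) + 2) + (1 - α * t) ^ (m + 3) / ((m:ℝ) + 3)) / α ^ 2)
        (t * (1 - α * t) ^ (m + 1)) t := by
      intro t
      have h := ((((hin t).pow (m + 2)).neg.div_const ((m:ℝ) + 2)).add
        (((hin t).pow (m + 3)).div_const ((m:ℝ) + 3))).div_const (α ^ 2)
      convert h using 1
      · rfl
      · rfl
      · rfl
      have h1 : (m + 2 - 1) = m + 1 := by omega
      have h2 : (m + 3 - 1) = m + 2 := by omega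
      rw [h1, h2]
      have hexp : (1 - α * t) ^ (m + 2) = (1 - α * t) ^ (m + 1) * (1 - α * t) := by ring
      field_simp
      push_cast
      ring
    rw [integral_eq_sub_of_hasDerivAt (fun t _ => hG t)
      ((continuous_id.mul ((continuous_const.sub (continuous_const.mul continuous_id)).pow _)).intervalIntegrable 0 r)]
    simp only [hbdef]
    field_simp
    ring
  rw [hI0, hI1]
  push_cast
  have hB0 : (0:ℝ) ≤ b ^ (m + 2) := pow_nonneg hb0 _
  have hbern : 1 + ((m:ℝ) + 2) * (b - 1) ≤ b ^ (m + 2) := by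
    have := one_add_mul_le_pow (a := b - 1) (by linarith) (m + 2)
    simpa using this
  have hb3 : b ^ (m + 3) = b ^ (m + 2) * b := by ring
  rw [hb3, div_pow, mul_pow]
  have hα2 : (0:ℝ) < α ^ 2 := by positivity
  have key : 1 - ((m:ℝ) + 3) * b ^ (m + 2) + ((m:ℝ) + 2) * (b ^ (m + 2) * b)
      ≤ (1 - b ^ (m + 2)) ^ 2 := by
    nlinarith [mul_nonneg hB0 (sub_nonneg.2 hbern)]
  rw [div_mul_div_comm, div_le_div_iff₀ hα2 (by positivity)]
  have expand : (1 / ((m:ℝ) + 2) - 1 / ((m:ℝ) + 3) - b ^ (m + 2) / ((m:ℝ) + 2)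
        + b ^ (m + 2) * b / ((m:ℝ) + 3)) * (((m:ℝ) + 2 + 1) * (((m:ℝ) + 2) ^ 2 * α ^ 2))
      = ((m:ℝ) + 2) * α ^ 2 *
        (1 - ((m:ℝ) + 3) * b ^ (m + 2) + ((m:ℝ) + 2) * (b ^ (m + 2) * b)) := by
    field_simp
    ring
  rw [expand]
  nlinarith [mul_le_mul_of_nonneg_left key (mul_pos hm2 hα2).le]
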